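/- For every integer N ≥ 3, every N×N real symmetric positive semidefinite matrix X with all diagonal entries equal to 1 satisfies Σ_{i=1}^{N−1} X_{i,i+1} − X_{N,1} ≤ N·cos(π/N). -/

import Mathlib

open Real Finset

/-- trig kernel sum -/
noncomputable def Csum (N : ℕ) (x : ℝ) : ℝ :=
  ∑ k ∈ Finset.range N, Real.cos ((2*(k:ℝ)+1) * Real.pi * x / N)

lemma Csum_even (N : ℕ) (x : ℝ) : Csum N (-x) = Csum N x := by
  refine Finset.sum_congr rfl fun k _ => ?_
  rw [show (2*(k:ℝ)+1) * Real.pi * (-x) / N = -((2*(k:ℝ)+1) * Real.pi * x / N) by ring,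
    Real.cos_neg]

lemma Csum_zero (N : ℕ) : Csum N 0 = N := by
  unfold Csum
  rw [Finset.sum_congr rfl fun k _ => by
    rw [show (2*(k:ℝ)+1) * Real.pi * 0 / N = 0 by ring, Real.cos_zero]]
  simp

lemma Csum_N (N : ℕ) (hN : 0 < N) : Csum N N = -N := by
  unfold Csum
  rw [Finset.sum_congr rfl fun k _ => by
    rw [show (2*(k:ℝ)+1) * Real.pi * N / N = Real.pi + (k:ℤ) * (2*Real.pi) by
      push_cast; field_simp; ring, Real.cos_add_int_mul_two_pi, Real.cos_pi]]
  simp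

lemma Csum_eq_zero (N : ℕ) (hN : 0 < N) (m : ℕ) (hm : ¬ (N ∣ m)) : Csum N m = 0 := by
  set θ : ℝ := Real.pi * m / N with hθ
  have hNR : (N:ℝ) ≠ 0 := Nat.cast_ne_zero.mpr hN.ne'
  have hsin : Real.sin θ ≠ 0 := by
    intro h
    obtain ⟨z, hz⟩ := Real.sin_eq_zero_iff.mp h
    apply hm
    rw [hθ] at hz
    have h1 : Real.pi * ((z:ℝ) * N) = Real.pi * m := by
      field_simp at hz; rw [hz]
    have h2 : (z:ℝ) * N = m := mul_left_cancel₀ Real.pi_ne_zero h1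
    have h3 : (m:ℤ) = N * z := by exact_mod_cast (by linarith : (m:ℝ) = N * z)
    have : (N:ℤ) ∣ (m:ℤ) := ⟨z, h3⟩
    exact_mod_cast this
  have tele := Finset.sum_range_sub (fun k : ℕ => Real.sin (2*k*θ)) N
  have key : ∑ i ∈ Finset.range N,
      ((fun k : ℕ => Real.sin (2*k*θ)) (i+1) - (fun k : ℕ => Real.sin (2*k*θ)) i)
      = 2 * Real.sin θ * Csum N m := by
    unfold Csum
    rw [Finset.mul_sum]
    refine Finset.sum_congr rfl fun k _ => ?_
    simp only []
    rw [Real.sin_sub_sin]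
    rw [show (2*(k:ℝ)+1) * Real.pi * m / N = (2*k+1) * θ by rw [hθ]; ring]
    push_cast
    ring_nf
  rw [key] at tele
  have hN2 : Real.sin (2*((N:ℕ):ℝ)*θ) = 0 := by
    rw [show 2*((N:ℕ):ℝ)*θ = ((2*m : ℕ):ℝ) * Real.pi by rw [hθ]; push_cast; field_simp]
    exact Real.sin_nat_mul_pi (2*m)
  have hZ : Real.sin (2*((0:ℕ):ℝ)*θ) = 0 := by norm_num
  rw [hN2, hZ, sub_zero] at tele
  rcases mul_eq_zero.mp tele with h | h
  · exact absurd h (by simpa using hsin)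
  · exact h

lemma not_dvd_of {N m : ℕ} (h1 : 0 < m) (h2 : m < N) : ¬ N ∣ m :=
  fun h => absurd (Nat.le_of_dvd h1 h) (by omega)

/-- dual kernel -/
noncomputable def gker (N : ℕ) (x : ℝ) : ℝ :=
  ∑ k ∈ Finset.range N, (Real.cos (Real.pi/N) - Real.cos ((2*(k:ℝ)+1)*Real.pi/N)) *
    Real.cos ((2*(k:ℝ)+1) * Real.pi * x / N)

lemma gker_even (N : ℕ) (x : ℝ) : gker N (-x) = gker N x := by
  refine Finset.sum_congr rfl fun k _ => ?_
  rw [show (2*(k:ℝ)+1) * Real.pi * (-x) / N = -((2*(k:ℝ)+1) * Real.pi * x / N) by ring,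
    Real.cos_neg]

lemma gker_eq (N : ℕ) (x : ℝ) :
    gker N x = Real.cos (Real.pi/N) * Csum N x - (Csum N (x+1) + Csum N (x-1))/2 := by
  unfold gker Csum
  rw [Finset.mul_sum, ← Finset.sum_add_distrib, Finset.sum_div, ← Finset.sum_sub_distrib]
  refine Finset.sum_congr rfl fun k _ => ?_
  have h1 : (2*(k:ℝ)+1) * Real.pi * (x+1) / N
      = (2*(k:ℝ)+1) * Real.pi * x / N + (2*(k:ℝ)+1)*Real.pi/N := by ring
  have h2 : (2*(k:ℝ)+1) * Real.pi * (x-1) / N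
      = (2*(k:ℝ)+1) * Real.pi * x / N - (2*(k:ℝ)+1)*Real.pi/N := by ring
  rw [h1, h2, Real.cos_add, Real.cos_sub]
  ring

lemma gker_zero (N : ℕ) (hN : 3 ≤ N) : gker N 0 = N * Real.cos (Real.pi/N) := by
  have h0 : (0:ℕ) < N := by omega
  have e1 : Csum N ((0:ℝ)+1) = 0 := by
    rw [show ((0:ℝ)+1) = ((1:ℕ):ℝ) by norm_num]
    exact Csum_eq_zero N h0 1 (not_dvd_of one_pos (by omega))
  have e2 : Csum N ((0:ℝ)-1) = 0 := by
    rw [show ((0:ℝ)-1) = -((1:ℕ):ℝ) by norm_num, Csum_even]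
    exact Csum_eq_zero N h0 1 (not_dvd_of one_pos (by omega))
  rw [gker_eq, Csum_zero, e1, e2]
  ring

lemma gker_one (N : ℕ) (hN : 3 ≤ N) : gker N 1 = -(N/2) := by
  have h0 : (0:ℕ) < N := by omega
  have e0 : Csum N (1:ℝ) = 0 := by
    rw [show (1:ℝ) = ((1:ℕ):ℝ) by norm_num]
    exact Csum_eq_zero N h0 1 (not_dvd_of one_pos (by omega))
  have e1 : Csum N ((1:ℝ)+1) = 0 := by
    rw [show ((1:ℝ)+1) = ((2:ℕ):ℝ) by norm_num]
    exact Csum_eq_zero N h0 2 (not_dvd_of (by norm_num) (by omega))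
  have e2 : Csum N ((1:ℝ)-1) = (N:ℝ) := by
    rw [show ((1:ℝ)-1) = (0:ℝ) by norm_num, Csum_zero]
  rw [gker_eq, e0, e1, e2]
  ring

lemma gker_top (N : ℕ) (hN : 3 ≤ N) : gker N ((N-1 : ℕ):ℝ) = N/2 := by
  have h0 : (0:ℕ) < N := by omega
  have e0 : Csum N ((N-1:ℕ):ℝ) = 0 :=
    Csum_eq_zero N h0 (N-1) (not_dvd_of (by omega) (by omega))
  have e1 : Csum N (((N-1:ℕ):ℝ)+1) = -(N:ℝ) := by
    rw [show (((N-1:ℕ):ℝ)+1) = ((N:ℕ):ℝ) by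
      rw [Nat.cast_sub (by omega : 1 ≤ N)]; push_cast; ring]
    exact Csum_N N h0
  have e2 : Csum N (((N-1:ℕ):ℝ)-1) = 0 := by
    rw [show (((N-1:ℕ):ℝ)-1) = ((N-2:ℕ):ℝ) by
      rw [Nat.cast_sub (by omega : 1 ≤ N), Nat.cast_sub (by omega : 2 ≤ N)]; push_cast; ring]
    exact Csum_eq_zero N h0 (N-2) (not_dvd_of (by omega) (by omega))
  rw [gker_eq, e0, e1, e2]
  ring

lemma gker_mid (N : ℕ) (hN : 3 ≤ N) (m : ℕ) (h2 : 2 ≤ m) (hm : m ≤ N-2) :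
    gker N m = 0 := by
  have h0 : (0:ℕ) < N := by omega
  have e0 : Csum N ((m:ℕ):ℝ) = 0 :=
    Csum_eq_zero N h0 m (not_dvd_of (by omega) (by omega))
  have e1 : Csum N (((m:ℕ):ℝ)+1) = 0 := by
    rw [show (((m:ℕ):ℝ)+1) = ((m+1:ℕ):ℝ) by push_cast; ring]
    exact Csum_eq_zero N h0 (m+1) (not_dvd_of (by omega) (by omega))
  have e2 : Csum N (((m:ℕ):ℝ)-1) = 0 := by
    rw [show (((m:ℕ):ℝ)-1) = ((m-1:ℕ):ℝ) by
      rw [Nat.cast_sub (by omega : 1 ≤ m)]; push_cast; ring]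
    exact Csum_eq_zero N h0 (m-1) (not_dvd_of (by omega) (by omega))
  rw [gker_eq, e0, e1, e2]
  ring

lemma coef_nonneg (N k : ℕ) (hN : 3 ≤ N) (hk : k < N) :
    0 ≤ Real.cos (Real.pi/N) - Real.cos ((2*(k:ℝ)+1)*Real.pi/N) := by
  have hNR : (0:ℝ) < N := Nat.cast_pos.mpr (by omega)
  have hpi := Real.pi_pos
  have hd : (0:ℝ) < Real.pi/N := div_pos hpi hNR
  have hkR : (k:ℝ) < N := Nat.cast_lt.mpr hk
  rw [sub_nonneg]
  rcases le_or_gt (2*k+1) N with h | h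
  · have hR : 2*(k:ℝ)+1 ≤ N := by exact_mod_cast h
    apply Real.cos_le_cos_of_nonneg_of_le_pi hd.le
    · rw [div_le_iff₀ hNR]; nlinarith
    · rw [div_le_div_iff₀ hNR hNR]
      nlinarith [mul_nonneg (mul_nonneg (by positivity : (0:ℝ) ≤ 2*(k:ℝ)) hpi.le) hNR.le]
  · have hR : (N:ℝ) < 2*(k:ℝ)+1 := by exact_mod_cast h
    rw [← Real.cos_two_pi_sub]
    apply Real.cos_le_cos_of_nonneg_of_le_pi hd.le
    · -- 2π - α ≤ π
      have : Real.pi ≤ (2*(k:ℝ)+1)*Real.pi/N := by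
        rw [le_div_iff₀ hNR]; nlinarith
      linarith
    · -- π/N ≤ 2π - α
      have hkR1 : (k:ℝ) + 1 ≤ N := by exact_mod_cast hk
      have hdm : (Real.pi/N)*N = Real.pi := div_mul_cancel₀ _ hNR.ne'
      have : (2*(k:ℝ)+1)*Real.pi/N ≤ 2*Real.pi - Real.pi/N := by
        rw [div_le_iff₀ hNR, sub_mul, hdm]
        nlinarith [mul_nonneg (sub_nonneg.mpr hkR1) hpi.le]
      linarith

/-- Entry of a matrix indexed by naturals (0 outside the range). -/
noncomputable def entry {N : ℕ} (X : Matrix (Fin N) (Fin N) ℝ) (i j : ℕ) : ℝ :=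
  if h : i < N ∧ j < N then X ⟨i, h.1⟩ ⟨j, h.2⟩ else 0

/-- The N-cycle objective Σ_{i=1}^{N−1} X_{i,i+1} − X_{N,1} (0-indexed). -/
noncomputable def cycObj (N : ℕ) (X : Matrix (Fin N) (Fin N) ℝ) : ℝ :=
  (∑ i ∈ Finset.range (N - 1), entry X i (i + 1)) - entry X (N - 1) 0

lemma entry_eq {N : ℕ} (X : Matrix (Fin N) (Fin N) ℝ) (i j : ℕ) (hi : i < N) (hj : j < N) :
    entry X i j = X ⟨i, hi⟩ ⟨j, hj⟩ := dif_pos ⟨hi, hj⟩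

lemma entry_symm {N : ℕ} (X : Matrix (Fin N) (Fin N) ℝ) (hX : X.IsHermitian) (a b : ℕ) :
    entry X a b = entry X b a := by
  unfold entry
  by_cases h : a < N ∧ b < N
  · rw [dif_pos h, dif_pos ⟨h.2, h.1⟩]
    exact (hX.apply ⟨a, h.1⟩ ⟨b, h.2⟩).symm
  · rw [dif_neg h, dif_neg (fun h' => h ⟨h'.2, h'.1⟩)]

lemma double_sum_fin {N : ℕ} (F : ℕ → ℕ → ℝ) :
    ∑ j ∈ Finset.range N, ∑ l ∈ Finset.range N, F j l
      = ∑ j : Fin N, ∑ l : Fin N, F j l := by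
  rw [← Fin.sum_univ_eq_sum_range (fun j => ∑ l ∈ Finset.range N, F j l) N]
  exact Finset.sum_congr rfl fun j _ =>
    (Fin.sum_univ_eq_sum_range (fun l => F j l) N).symm

lemma quad_nonneg {N : ℕ} (X : Matrix (Fin N) (Fin N) ℝ) (hX : X.PosSemidef) (f : ℕ → ℝ) :
    0 ≤ ∑ j ∈ Finset.range N, ∑ l ∈ Finset.range N, entry X j l * (f j * f l) := by
  rw [double_sum_fin]
  have h := hX.dotProduct_mulVec_nonneg (fun i : Fin N => f i)
  simp only [dotProduct, Matrix.mulVec, Pi.star_apply, star_trivial,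
    Finset.mul_sum] at h
  refine le_trans h (le_of_eq ?_)
  refine Finset.sum_congr rfl fun j _ => Finset.sum_congr rfl fun l _ => ?_
  rw [entry_eq X j l j.2 l.2]
  simp only [Fin.eta]
  ring

theorem cycle_sdp_bound (N : ℕ) (hN : 3 ≤ N) (X : Matrix (Fin N) (Fin N) ℝ)
    (hX : X.PosSemidef) (hdiag : ∀ i, X i i = 1) :
    cycObj N X ≤ (N : ℝ) * Real.cos (Real.pi / N) := by
  have hN0 : (0:ℝ) < N := Nat.cast_pos.mpr (by omega)
  set c := Real.cos (Real.pi / N) with hc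
  set S := ∑ j ∈ Finset.range N, ∑ l ∈ Finset.range N,
      entry X j l * gker N ((l:ℝ) - (j:ℝ)) with hS
  have hSnn : 0 ≤ S := by
    have e1 : S = ∑ j ∈ Finset.range N, ∑ l ∈ Finset.range N, ∑ k ∈ Finset.range N,
        (c - Real.cos ((2*(k:ℝ)+1)*Real.pi/N)) *
          (entry X j l * (Real.cos ((2*(k:ℝ)+1)*Real.pi*j/N) * Real.cos ((2*(k:ℝ)+1)*Real.pi*l/N))
         + entry X j l * (Real.sin ((2*(k:ℝ)+1)*Real.pi*j/N) * Real.sin ((2*(k:ℝ)+1)*Real.pi*l/N))) := by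
      rw [hS]
      refine Finset.sum_congr rfl fun j _ => Finset.sum_congr rfl fun l _ => ?_
      rw [gker, Finset.mul_sum]
      refine Finset.sum_congr rfl fun k _ => ?_
      rw [show (2*(k:ℝ)+1)*Real.pi*((l:ℝ)-(j:ℝ))/N
          = (2*(k:ℝ)+1)*Real.pi*l/N - (2*(k:ℝ)+1)*Real.pi*j/N by ring, Real.cos_sub]
      ring
    have e2 : S = ∑ k ∈ Finset.range N, ∑ j ∈ Finset.range N, ∑ l ∈ Finset.range N,
        (c - Real.cos ((2*(k:ℝ)+1)*Real.pi/N)) *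
          (entry X j l * (Real.cos ((2*(k:ℝ)+1)*Real.pi*j/N) * Real.cos ((2*(k:ℝ)+1)*Real.pi*l/N))
         + entry X j l * (Real.sin ((2*(k:ℝ)+1)*Real.pi*j/N) * Real.sin ((2*(k:ℝ)+1)*Real.pi*l/N))) := by
      rw [e1]
      rw [Finset.sum_congr rfl fun j _ => Finset.sum_comm]
      exact Finset.sum_comm
    rw [e2]
    refine Finset.sum_nonneg fun k hk => ?_
    have hcoef := coef_nonneg N k hN (Finset.mem_range.mp hk)
    have split : ∑ j ∈ Finset.range N, ∑ l ∈ Finset.range N,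
        (c - Real.cos ((2*(k:ℝ)+1)*Real.pi/N)) *
          (entry X j l * (Real.cos ((2*(k:ℝ)+1)*Real.pi*j/N) * Real.cos ((2*(k:ℝ)+1)*Real.pi*l/N))
         + entry X j l * (Real.sin ((2*(k:ℝ)+1)*Real.pi*j/N) * Real.sin ((2*(k:ℝ)+1)*Real.pi*l/N)))
        = (c - Real.cos ((2*(k:ℝ)+1)*Real.pi/N)) *
          ((∑ j ∈ Finset.range N, ∑ l ∈ Finset.range N,
             entry X j l * ((fun x : ℕ => Real.cos ((2*(k:ℝ)+1)*Real.pi*x/N)) j *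
               (fun x : ℕ => Real.cos ((2*(k:ℝ)+1)*Real.pi*x/N)) l))
          + (∑ j ∈ Finset.range N, ∑ l ∈ Finset.range N,
             entry X j l * ((fun x : ℕ => Real.sin ((2*(k:ℝ)+1)*Real.pi*x/N)) j *
               (fun x : ℕ => Real.sin ((2*(k:ℝ)+1)*Real.pi*x/N)) l))) := by
      rw [mul_add, Finset.mul_sum, Finset.mul_sum, ← Finset.sum_add_distrib]
      refine Finset.sum_congr rfl fun j _ => ?_
      rw [Finset.mul_sum, Finset.mul_sum, ← Finset.sum_add_distrib]
      exact Finset.sum_congr rfl fun l _ => by ring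
    rw [split]
    exact mul_nonneg hcoef (add_nonneg (quad_nonneg X hX _) (quad_nonneg X hX _))
  have key : ∀ j ∈ Finset.range N, ∀ l ∈ Finset.range N,
      entry X j l * gker N ((l:ℝ) - (j:ℝ)) =
        (if l = j then (N:ℝ)*c*entry X j j else 0)
      + (if l = j+1 then -((N:ℝ)/2)*entry X j (j+1) else 0)
      + (if l+1 = j then -((N:ℝ)/2)*entry X j l else 0)
      + (if j = 0 ∧ l = N-1 then ((N:ℝ)/2)*entry X 0 (N-1) else 0)
      + (if l = 0 ∧ j = N-1 then ((N:ℝ)/2)*entry X (N-1) 0 else 0) := by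
    intro j hj l hl
    rw [Finset.mem_range] at hj hl
    by_cases h1 : l = j
    · subst h1
      rw [show ((l:ℝ) - (l:ℝ)) = (0:ℝ) by ring, gker_zero N hN,
        if_pos rfl, if_neg (by omega), if_neg (by omega),
        if_neg (by omega), if_neg (by omega)]
      rw [← hc]; ring
    · by_cases h2 : l = j+1
      · subst h2
        rw [show (((j+1:ℕ):ℝ) - (j:ℝ)) = (1:ℝ) by push_cast; ring, gker_one N hN,
          if_neg h1, if_pos rfl, if_neg (by omega), if_neg (by omega), if_neg (by omega)]
        ring
      · by_cases h3 : l+1 = j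
        · rw [show ((l:ℝ) - (j:ℝ)) = -(1:ℝ) by rw [← h3]; push_cast; ring,
            gker_even, gker_one N hN,
            if_neg h1, if_neg h2, if_pos h3, if_neg (by omega), if_neg (by omega)]
          ring
        · by_cases h4 : j = 0 ∧ l = N-1
          · rw [show ((l:ℝ) - (j:ℝ)) = ((N-1:ℕ):ℝ) by rw [h4.1, h4.2]; simp,
              gker_top N hN, if_neg h1, if_neg h2, if_neg h3, if_pos h4,
              if_neg (by omega), h4.1, h4.2]
            ring
          · by_cases h5 : l = 0 ∧ j = N-1
            · rw [show ((l:ℝ) - (j:ℝ)) = -((N-1:ℕ):ℝ) by rw [h5.1, h5.2]; simp,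
                gker_even, gker_top N hN, if_neg h1, if_neg h2, if_neg h3, if_neg h4,
                if_pos h5, h5.1, h5.2]
              ring
            · rw [if_neg h1, if_neg h2, if_neg h3, if_neg h4, if_neg h5]
              rcases Nat.lt_or_ge j l with hlt | hge
              · have hm2 : 2 ≤ l - j := by omega
                have hmN : l - j ≤ N - 2 := by omega
                rw [show ((l:ℝ) - (j:ℝ)) = ((l-j:ℕ):ℝ) by
                    rw [Nat.cast_sub (by omega : j ≤ l)],
                  gker_mid N hN (l-j) hm2 hmN]
                ring
              · have hlt : l < j := by omega
                have hm2 : 2 ≤ j - l := by omega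
                have hmN : j - l ≤ N - 2 := by omega
                rw [show ((l:ℝ) - (j:ℝ)) = -((j-l:ℕ):ℝ) by
                    rw [Nat.cast_sub (by omega : l ≤ j)]; ring,
                  gker_even, gker_mid N hN (j-l) hm2 hmN]
                ring
  have hSval : S = (N:ℝ)*((N:ℝ)*c) - (N:ℝ) * cycObj N X := by
    have inner : ∀ j ∈ Finset.range N,
        (∑ l ∈ Finset.range N,
          ((if l = j then (N:ℝ)*c*entry X j j else 0)
          + (if l = j+1 then -((N:ℝ)/2)*entry X j (j+1) else 0)
          + (if l+1 = j then -((N:ℝ)/2)*entry X j l else 0)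
          + (if j = 0 ∧ l = N-1 then ((N:ℝ)/2)*entry X 0 (N-1) else 0)
          + (if l = 0 ∧ j = N-1 then ((N:ℝ)/2)*entry X (N-1) 0 else 0)))
        = (N:ℝ)*c*entry X j j
          + (if j+1 < N then -((N:ℝ)/2)*entry X j (j+1) else 0)
          + (if 1 ≤ j then -((N:ℝ)/2)*entry X j (j-1) else 0)
          + (if j = 0 then ((N:ℝ)/2)*entry X 0 (N-1) else 0)
          + (if j = N-1 then ((N:ℝ)/2)*entry X (N-1) 0 else 0) := by
      intro j hj
      rw [Finset.mem_range] at hj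
      rw [Finset.sum_add_distrib, Finset.sum_add_distrib, Finset.sum_add_distrib,
        Finset.sum_add_distrib]
      congr 1
      congr 1
      congr 1
      congr 1
      · rw [Finset.sum_ite_eq' (Finset.range N) j (fun _ => (N:ℝ)*c*entry X j j),
          if_pos (Finset.mem_range.mpr hj)]
      · rw [Finset.sum_ite_eq' (Finset.range N) (j+1)
            (fun _ => -((N:ℝ)/2)*entry X j (j+1))]
        simp [Finset.mem_range]
      · by_cases hj0 : j = 0
        · rw [Finset.sum_eq_zero (fun l _ => if_neg (by omega)), if_neg (by omega)]
        · have hcond : ∀ l : ℕ, (l+1 = j) = (l = j-1) := fun l => propext (by omega)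
          simp_rw [hcond]
          rw [Finset.sum_ite_eq' (Finset.range N) (j-1)
              (fun l => -((N:ℝ)/2)*entry X j l),
            if_pos (Finset.mem_range.mpr (by omega)), if_pos (by omega)]
      · by_cases hj0 : j = 0
        · subst hj0
          simp_rw [true_and]
          rw [Finset.sum_ite_eq' (Finset.range N) (N-1)
              (fun _ => ((N:ℝ)/2)*entry X 0 (N-1)),
            if_pos (Finset.mem_range.mpr (by omega))]
          simp
        · rw [Finset.sum_eq_zero (fun l _ => if_neg (by tauto)), if_neg hj0]
      · by_cases hjN : j = N-1
        · subst hjN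
          simp_rw [and_true]
          rw [Finset.sum_ite_eq' (Finset.range N) 0
              (fun _ => ((N:ℝ)/2)*entry X (N-1) 0),
            if_pos (Finset.mem_range.mpr (by omega))]
          simp
        · rw [Finset.sum_eq_zero (fun l _ => if_neg (by tauto)), if_neg hjN]
    rw [hS, Finset.sum_congr rfl (fun j hj => Finset.sum_congr rfl (fun l hl => key j hj l hl)),
      Finset.sum_congr rfl inner]
    rw [Finset.sum_add_distrib, Finset.sum_add_distrib, Finset.sum_add_distrib,
      Finset.sum_add_distrib]
    have O1 : ∑ j ∈ Finset.range N, (N:ℝ)*c*entry X j j = (N:ℝ)*((N:ℝ)*c) := by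
      have e : ∀ j ∈ Finset.range N, (N:ℝ)*c*entry X j j = (N:ℝ)*c := by
        intro j hj
        rw [entry_eq X j j (Finset.mem_range.mp hj) (Finset.mem_range.mp hj), hdiag, mul_one]
      rw [Finset.sum_congr rfl e, Finset.sum_const, Finset.card_range, nsmul_eq_mul]
    have O2 : ∑ j ∈ Finset.range N, (if j+1 < N then -((N:ℝ)/2)*entry X j (j+1) else 0)
        = -((N:ℝ)/2) * ∑ i ∈ Finset.range (N-1), entry X i (i+1) := by
      rw [← Finset.sum_subset (Finset.range_subset_range.mpr (by omega : N-1 ≤ N))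
          (fun x hx hnx => if_neg (by
            rw [Finset.mem_range] at hx; simp only [Finset.mem_range] at hnx; omega))]
      rw [Finset.mul_sum]
      refine Finset.sum_congr rfl fun i hi => ?_
      rw [Finset.mem_range] at hi
      rw [if_pos (by omega)]
    have O3 : ∑ j ∈ Finset.range N, (if 1 ≤ j then -((N:ℝ)/2)*entry X j (j-1) else 0)
        = -((N:ℝ)/2) * ∑ i ∈ Finset.range (N-1), entry X i (i+1) := by
      rw [show Finset.range N = Finset.range ((N-1)+1) by congr 1; omega,
        Finset.sum_range_succ']
      rw [if_neg (by omega), add_zero, Finset.mul_sum]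
      refine Finset.sum_congr rfl fun i hi => ?_
      rw [if_pos (by omega)]
      rw [show i+1-1 = i by omega, entry_symm X hX.1 (i+1) i]
    have O4 : ∑ j ∈ Finset.range N, (if j = 0 then ((N:ℝ)/2)*entry X 0 (N-1) else 0)
        = ((N:ℝ)/2)*entry X (N-1) 0 := by
      rw [Finset.sum_ite_eq' (Finset.range N) 0 (fun _ => ((N:ℝ)/2)*entry X 0 (N-1)),
        if_pos (Finset.mem_range.mpr (by omega)), entry_symm X hX.1 0 (N-1)]
    have O5 : ∑ j ∈ Finset.range N, (if j = N-1 then ((N:ℝ)/2)*entry X (N-1) 0 else 0)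
        = ((N:ℝ)/2)*entry X (N-1) 0 := by
      rw [Finset.sum_ite_eq' (Finset.range N) (N-1) (fun _ => ((N:ℝ)/2)*entry X (N-1) 0),
        if_pos (Finset.mem_range.mpr (by omega))]
    rw [O1, O2, O3, O4, O5, cycObj]
    ring
  rw [hSval] at hSnn
  have h2 : (N:ℝ) * cycObj N X ≤ (N:ℝ)*((N:ℝ)*c) := by linarith
  exact le_of_mul_le_mul_left h2 hN0
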